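/- Let (Ω, 𝒜, P) be a probability space with filtration (ℱ_t)_{t≥0}, let (Δ_t)_{t≥1} and (Δ'_t)_{t≥1} be real random variables with Δ_t and Δ'_t ℱ_t-measurable and E[Δ_t | ℱ_{t−1}] = 0, E[Δ'_t | ℱ_{t−1}] = 0 almost surely. Fix b > 0 with |Δ_t| ≤ b almost surely for all t ≥ 1, and a nonnegative sequence (σ_t)_{t≥2} with |Δ_t − Δ'_t| ≤ σ_t almost surely for all t ≥ 2. Let (γ_t)_{t≥2} be in [0,1), set Γ_1 = 1, Γ_t = ∏_{i=2}^{t}(1−γ_i), M_1 = Δ_1, M_t = Δ_t − (1−γ_t)·Δ'_t + (1−γ_t)·M_{t−1}, and define V_1 = b², V_t = (γ_t·b + (1−γ_t)·σ_t)² + (1−γ_t)²·V_{t−1}. Then for every c > 0 and every T ≥ 1, P( there exists t ∈ {1,…,T} with |M_t| ≥ √(c/(2·V_T)) · ( V_T·Γ_t/Γ_T + V_t·Γ_T/Γ_t ) ) ≤ 2·exp(−c). -/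

import Mathlib

open MeasureTheory Filter

lemma hoeffding_pointwise {κ L x : ℝ} (hκ : 0 < κ) (hx : |x| ≤ κ) :
    Real.exp (L * x) ≤ Real.cosh (L * κ) + (Real.sinh (L * κ) / κ) * x := by
  have hx1 : -κ ≤ x := (abs_le.mp hx).1
  have hx2 : x ≤ κ := (abs_le.mp hx).2
  have h2κ : (2 * κ) ≠ 0 := by positivity
  have ht1 : 0 ≤ (κ - x) / (2 * κ) := div_nonneg (by linarith) (by positivity)
  have ht2 : 0 ≤ (κ + x) / (2 * κ) := div_nonneg (by linarith) (by positivity)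
  have hts : (κ - x) / (2 * κ) + (κ + x) / (2 * κ) = 1 := by
    rw [← add_div, div_eq_one_iff_eq h2κ]; ring
  have h := convexOn_exp.2 (Set.mem_univ (-(L * κ))) (Set.mem_univ (L * κ)) ht1 ht2 hts
  simp only [smul_eq_mul] at h
  have harg : (κ - x) / (2 * κ) * (-(L * κ)) + (κ + x) / (2 * κ) * (L * κ) = L * x := by
    rw [div_mul_eq_mul_div, div_mul_eq_mul_div, ← add_div, div_eq_iff h2κ]; ring
  rw [harg] at h
  refine h.trans_eq ?_
  rw [Real.cosh_eq, Real.sinh_eq]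
  field_simp
  ring

lemma integrable_of_abs_le {Ω : Type*} {m0 : MeasurableSpace Ω} {μ : Measure Ω}
    [IsFiniteMeasure μ] {f : Ω → ℝ} {C : ℝ} (hf : AEStronglyMeasurable f μ)
    (h : ∀ᵐ ω ∂μ, |f ω| ≤ C) : Integrable f μ :=
  Integrable.mono' (integrable_const C) hf (by simpa [Real.norm_eq_abs] using h)

lemma condexp_exp_le {Ω : Type*} {m0 : MeasurableSpace Ω} {μ : Measure Ω} [IsProbabilityMeasure μ]
    {m : MeasurableSpace Ω} (hm : m ≤ m0) {d : Ω → ℝ} (hd : AEStronglyMeasurable[m0] d μ)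
    {κ : ℝ} (L : ℝ) (hκ : 0 ≤ κ) (hbd : ∀ᵐ ω ∂μ, |d ω| ≤ κ) (hcond : μ[d|m] =ᵐ[μ] 0) :
    μ[fun ω => Real.exp (L * d ω)|m] ≤ᵐ[μ] fun _ => Real.exp (L ^ 2 * κ ^ 2 / 2) := by
  have hexp_meas : AEStronglyMeasurable[m0] (fun ω => Real.exp (L * d ω)) μ :=
    (Real.continuous_exp.comp (continuous_const.mul continuous_id)).comp_aestronglyMeasurable hd
  rcases eq_or_lt_of_le hκ with h0 | hκpos
  · have hd0 : ∀ᵐ ω ∂μ, d ω = 0 := by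
      filter_upwards [hbd] with ω h
      have := abs_nonneg (d ω)
      have : |d ω| = 0 := le_antisymm (h.trans_eq h0.symm) this
      exact abs_eq_zero.mp this
    have h1 : (fun ω => Real.exp (L * d ω)) =ᵐ[μ] (fun _ => (1 : ℝ)) := by
      filter_upwards [hd0] with ω h; simp [h]
    refine ((condExp_congr_ae h1).trans (Filter.EventuallyEq.of_eq (condExp_const hm (1:ℝ)))).le.trans ?_
    refine Eventually.of_forall fun ω => ?_
    exact Real.one_le_exp (by positivity)
  · have hint_d : Integrable d μ := integrable_of_abs_le hd hbd
    have hint_exp : Integrable (fun ω => Real.exp (L * d ω)) μ := by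
      refine integrable_of_abs_le (C := Real.exp (|L| * κ)) hexp_meas ?_
      filter_upwards [hbd] with ω h
      rw [abs_of_pos (Real.exp_pos _)]
      refine Real.exp_le_exp.mpr ?_
      calc L * d ω ≤ |L * d ω| := le_abs_self _
        _ = |L| * |d ω| := abs_mul _ _
        _ ≤ |L| * κ := by gcongr
    set s : ℝ := Real.sinh (L * κ) / κ with hs
    have hint_rhs : Integrable (fun ω => Real.cosh (L * κ) + s * d ω) μ :=
      (integrable_const _).add (hint_d.const_mul _)
    have hpt : ∀ᵐ ω ∂μ, Real.exp (L * d ω) ≤ Real.cosh (L * κ) + s * d ω := by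
      filter_upwards [hbd] with ω h
      exact hoeffding_pointwise hκpos h
    have hmono := condExp_mono (m := m) hint_exp hint_rhs hpt
    have hrhs : μ[fun ω => Real.cosh (L * κ) + s * d ω|m] =ᵐ[μ] fun _ => Real.cosh (L * κ) := by
      have h1 : (fun ω => Real.cosh (L * κ) + s * d ω)
          = (fun _ => Real.cosh (L * κ)) + s • d := by
        funext ω; simp [smul_eq_mul]
      rw [h1]
      calc μ[(fun _ => Real.cosh (L * κ)) + s • d|m]
          =ᵐ[μ] μ[fun _ => Real.cosh (L * κ)|m] + μ[s • d|m] :=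
            condExp_add (integrable_const _) (hint_d.smul s) m
        _ =ᵐ[μ] (fun _ => Real.cosh (L * κ)) + s • μ[d|m] := by
            refine EventuallyEq.add ?_ (condExp_smul s d m)
            rw [condExp_const hm]
        _ =ᵐ[μ] fun _ => Real.cosh (L * κ) := by
            filter_upwards [hcond] with ω h
            simp [Pi.add_apply, Pi.smul_apply, h]
    refine (hmono.trans hrhs.le).trans (Eventually.of_forall fun ω => ?_)
    calc Real.cosh (L * κ) ≤ Real.exp ((L * κ) ^ 2 / 2) := Real.cosh_le_exp_half_sq _
      _ = Real.exp (L ^ 2 * κ ^ 2 / 2) := by rw [mul_pow]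

lemma ville {Ω : Type*} {m0 : MeasurableSpace Ω} {μ : Measure Ω} [IsProbabilityMeasure μ]
    {𝒢 : Filtration ℕ m0} {X : ℕ → Ω → ℝ} (hX : Supermartingale X 𝒢 μ)
    (hnn : ∀ t ω, 0 ≤ X t ω) {a : ℝ} (ha : 0 < a) (T : ℕ) :
    μ {ω | ∃ t, t ≤ T ∧ a ≤ X t ω} ≤ ENNReal.ofReal ((∫ ω, X 0 ω ∂μ) / a) := by
  set τ := fun ω => ((hittingBtwn X (Set.Ici a) 0 T ω : ℕ) : WithTop ℕ) with hτdef
  have hτ : IsStoppingTime 𝒢 τ := hX.stronglyAdapted.adapted.isStoppingTime_hittingBtwn measurableSet_Ici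
  set A := {ω | ∃ t, t ≤ T ∧ a ≤ X t ω} with hA
  have hAmeas : MeasurableSet A := by
    have : A = ⋃ t ∈ Set.Iic T, {ω | a ≤ X t ω} := by
      ext ω; simp [hA, Set.mem_setOf_eq]
    rw [this]
    exact MeasurableSet.biUnion (Set.to_countable _) fun t _ =>
      measurableSet_le measurable_const ((hX.stronglyMeasurable t).measurable.le (𝒢.le t))
  have hsvint : Integrable (stoppedValue X τ) μ := by
    have h := (hX.neg.integrable_stoppedValue hτ (fun ω => WithTop.coe_le_coe.mpr (hittingBtwn_le ω))).neg
    exact h.congr (Filter.Eventually.of_forall fun ω => by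
      simp [stoppedValue, Pi.neg_apply])
  have hsv_ge : ∀ ω ∈ A, a ≤ stoppedValue X τ ω := by
    intro ω hω
    obtain ⟨t, ht, hta⟩ := hω
    exact stoppedValue_hittingBtwn_mem (u := X) (s := Set.Ici a) (n := 0) (m := T)
      ⟨t, ⟨Nat.zero_le t, ht⟩, hta⟩
  have h1 : a * (μ A).toReal ≤ ∫ ω in A, stoppedValue X τ ω ∂μ :=
    by have := setIntegral_ge_of_const_le hAmeas (measure_ne_top μ A) hsv_ge hsvint.integrableOn
       rw [smul_eq_mul, mul_comm] at this; exact this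
  have h2 : ∫ ω in A, stoppedValue X τ ω ∂μ ≤ ∫ ω, stoppedValue X τ ω ∂μ :=
    setIntegral_le_integral hsvint (Filter.Eventually.of_forall fun ω => hnn _ _)
  have h3 : ∫ ω, stoppedValue X τ ω ∂μ ≤ ∫ ω, X 0 ω ∂μ := by
    have hmono := hX.neg.expected_stoppedValue_mono (isStoppingTime_const 𝒢 0) hτ
      (fun ω => WithTop.coe_le_coe.mpr (Nat.zero_le _)) (fun ω => WithTop.coe_le_coe.mpr (hittingBtwn_le ω))
    simp only [stoppedValue, Pi.neg_apply] at hmono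
    rw [integral_neg, integral_neg] at hmono
    have hsv : stoppedValue X τ = fun ω => X (hittingBtwn X (Set.Ici a) 0 T ω) ω := rfl
    rw [hsv]
    have hmono' : -∫ ω, X 0 ω ∂μ ≤ -∫ ω, X (hittingBtwn X (Set.Ici a) 0 T ω) ω ∂μ := hmono
    linarith
  have hfin : a * (μ A).toReal ≤ ∫ ω, X 0 ω ∂μ := h1.trans (h2.trans h3)
  calc μ A = ENNReal.ofReal ((μ A).toReal) := (ENNReal.ofReal_toReal (measure_ne_top μ A)).symm
    _ ≤ ENNReal.ofReal ((∫ ω, X 0 ω ∂μ) / a) := by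
        apply ENNReal.ofReal_le_ofReal
        rw [le_div_iff₀ ha]
        linarith

section Super

variable {Ω : Type*} {m0 : MeasurableSpace Ω} {μ : Measure Ω} [IsProbabilityMeasure μ]
  {ℱ : Filtration ℕ m0} {d : ℕ → Ω → ℝ} {κ : ℕ → ℝ} {L : ℝ}

lemma exp_sum_supermartingale (hκnn : ∀ t, 0 ≤ κ t)
    (hmeas : ∀ t, StronglyMeasurable[ℱ t] (d t))
    (hbd : ∀ t, ∀ᵐ ω ∂μ, |d t ω| ≤ κ t)
    (hcond : ∀ t, μ[d (t + 1)|ℱ t] =ᵐ[μ] 0) (L : ℝ) :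
    Supermartingale (fun t ω => Real.exp (L * (∑ i ∈ Finset.range (t + 1), d i ω)
      - L ^ 2 * (∑ i ∈ Finset.range (t + 1), κ i ^ 2) / 2)) ℱ μ := by
  set X : ℕ → Ω → ℝ := fun t ω => Real.exp (L * (∑ i ∈ Finset.range (t + 1), d i ω)
      - L ^ 2 * (∑ i ∈ Finset.range (t + 1), κ i ^ 2) / 2) with hX
  have hbd' : ∀ᵐ ω ∂μ, ∀ i, |d i ω| ≤ κ i := ae_all_iff.mpr hbd
  have hsum_meas : ∀ t, StronglyMeasurable[ℱ t] fun ω => ∑ i ∈ Finset.range (t + 1), d i ω := by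
    intro t
    apply Finset.stronglyMeasurable_fun_sum
    intro i hi
    exact (hmeas i).mono (ℱ.mono (Nat.lt_succ_iff.mp (Finset.mem_range.mp hi)))
  have hadp : StronglyAdapted ℱ X := by
    intro t
    apply Measurable.stronglyMeasurable
    apply Measurable.exp
    exact ((hsum_meas t).measurable.const_mul L).sub measurable_const
  have hXbd : ∀ t, ∀ᵐ ω ∂μ, |X t ω| ≤ Real.exp (|L| * ∑ i ∈ Finset.range (t + 1), κ i) := by
    intro t
    filter_upwards [hbd'] with ω hω
    rw [hX, abs_of_pos (Real.exp_pos _)]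
    apply Real.exp_le_exp.mpr
    have h1 : L * (∑ i ∈ Finset.range (t + 1), d i ω) ≤ |L| * ∑ i ∈ Finset.range (t + 1), κ i := by
      calc L * (∑ i ∈ Finset.range (t + 1), d i ω)
          ≤ |L * (∑ i ∈ Finset.range (t + 1), d i ω)| := le_abs_self _
        _ = |L| * |∑ i ∈ Finset.range (t + 1), d i ω| := abs_mul _ _
        _ ≤ |L| * ∑ i ∈ Finset.range (t + 1), |d i ω| := by
            gcongr; exact Finset.abs_sum_le_sum_abs _ _
        _ ≤ |L| * ∑ i ∈ Finset.range (t + 1), κ i := by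
            gcongr with i hi
            exact hω i
    have h2 : 0 ≤ L ^ 2 * (∑ i ∈ Finset.range (t + 1), κ i ^ 2) / 2 := by
      have : 0 ≤ ∑ i ∈ Finset.range (t + 1), κ i ^ 2 :=
        Finset.sum_nonneg fun i _ => sq_nonneg _
      positivity
    linarith
  have hint : ∀ t, Integrable (X t) μ := fun t =>
    integrable_of_abs_le ((hadp t).mono (ℱ.le t)).aestronglyMeasurable (hXbd t)
  refine supermartingale_nat hadp hint fun t => ?_
  set g : Ω → ℝ := fun ω => X t ω * Real.exp (-(L ^ 2 * κ (t + 1) ^ 2 / 2)) with hg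
  set e : Ω → ℝ := fun ω => Real.exp (L * d (t + 1) ω) with he
  have hXsucc : X (t + 1) = g * e := by
    funext ω
    show X (t + 1) ω = X t ω * Real.exp (-(L ^ 2 * κ (t + 1) ^ 2 / 2)) * Real.exp (L * d (t + 1) ω)
    simp only [hX]
    rw [← Real.exp_add, ← Real.exp_add]
    congr 1
    rw [Finset.sum_range_succ (f := fun i => d i ω) (n := t + 1),
      Finset.sum_range_succ (f := fun i => κ i ^ 2) (n := t + 1)]
    ring
  have hgmeas : StronglyMeasurable[ℱ t] g := (hadp t).mul stronglyMeasurable_const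
  have hemeas : AEStronglyMeasurable e μ :=
    (Real.continuous_exp.comp (continuous_const.mul continuous_id)).comp_aestronglyMeasurable
      (((hmeas (t + 1)).mono (ℱ.le _)).aestronglyMeasurable)
  have heint : Integrable e μ := by
    refine integrable_of_abs_le (C := Real.exp (|L| * κ (t + 1))) hemeas ?_
    filter_upwards [hbd (t + 1)] with ω hω
    rw [abs_of_pos (Real.exp_pos _)]
    apply Real.exp_le_exp.mpr
    calc L * d (t + 1) ω ≤ |L * d (t + 1) ω| := le_abs_self _
      _ = |L| * |d (t + 1) ω| := abs_mul _ _
      _ ≤ |L| * κ (t + 1) := by gcongr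
  have hgeint : Integrable (g * e) μ := hXsucc ▸ hint (t + 1)
  have hpull := condExp_mul_of_stronglyMeasurable_left hgmeas hgeint heint
  have hexp_le := condexp_exp_le (μ := μ) (ℱ.le t)
    (((hmeas (t + 1)).mono (ℱ.le _)).aestronglyMeasurable) L (hκnn (t + 1))
    (hbd (t + 1)) (hcond t)
  rw [hXsucc]
  filter_upwards [hpull, hexp_le] with ω h1 h2
  have hgnn : 0 ≤ g ω := by
    rw [hg, hX]; positivity
  calc (μ[g * e|ℱ t]) ω = g ω * (μ[e|ℱ t]) ω := h1
    _ ≤ g ω * Real.exp (L ^ 2 * κ (t + 1) ^ 2 / 2) := by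
        apply mul_le_mul_of_nonneg_left h2 hgnn
    _ = X t ω := by
        rw [hg, mul_assoc, ← Real.exp_add, neg_add_cancel, Real.exp_zero, mul_one]

lemma oeuvre_one_sided (hd0 : d 0 = 0) (hκ0 : κ 0 = 0) (hκnn : ∀ t, 0 ≤ κ t)
    (hmeas : ∀ t, StronglyMeasurable[ℱ t] (d t))
    (hbd : ∀ t, ∀ᵐ ω ∂μ, |d t ω| ≤ κ t)
    (hcond : ∀ t, μ[d (t + 1)|ℱ t] =ᵐ[μ] 0) (L : ℝ)
    {c : ℝ} (hc : 0 < c) (T : ℕ) :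
    μ {ω | ∃ t, t ≤ T ∧ c + L ^ 2 * (∑ i ∈ Finset.range (t + 1), κ i ^ 2) / 2
        ≤ L * ∑ i ∈ Finset.range (t + 1), d i ω} ≤ ENNReal.ofReal (Real.exp (-c)) := by
  have hX := exp_sum_supermartingale (μ := μ) (ℱ := ℱ) hκnn hmeas hbd hcond L
  set X : ℕ → Ω → ℝ := fun t ω => Real.exp (L * (∑ i ∈ Finset.range (t + 1), d i ω)
      - L ^ 2 * (∑ i ∈ Finset.range (t + 1), κ i ^ 2) / 2) with hXdef
  have hsub : {ω | ∃ t, t ≤ T ∧ c + L ^ 2 * (∑ i ∈ Finset.range (t + 1), κ i ^ 2) / 2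
        ≤ L * ∑ i ∈ Finset.range (t + 1), d i ω} ⊆ {ω | ∃ t, t ≤ T ∧ Real.exp c ≤ X t ω} := by
    intro ω hω
    obtain ⟨t, ht, hineq⟩ := hω
    exact ⟨t, ht, Real.exp_le_exp.mpr (by linarith)⟩
  have hX0 : (fun ω => X 0 ω) = fun _ => (1 : ℝ) := by
    funext ω
    simp [hXdef, hd0, hκ0]
  calc μ _ ≤ μ {ω | ∃ t, t ≤ T ∧ Real.exp c ≤ X t ω} := measure_mono hsub
    _ ≤ ENNReal.ofReal ((∫ ω, X 0 ω ∂μ) / Real.exp c) :=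
        ville hX (fun t ω => (Real.exp_pos _).le) (Real.exp_pos c) T
    _ = ENNReal.ofReal (Real.exp (-c)) := by
        rw [show (∫ ω, X 0 ω ∂μ) = 1 by rw [hX0]; simp, Real.exp_neg, one_div]

end Super

/-- Time-uniform concentration for the centered OEUVRE process: with `|Δ_t| ≤ b`,
`|Δ_t - Δ'_t| ≤ σ_t`, decay products `Γ_t = ∏_{i=2}^t (1-γ_i)` and variance
recursion `V_t`, for every `c > 0` and `T ≥ 1`,
`P(∃ t ∈ {1,…,T}, |M_t| ≥ √(c/(2V_T))·(V_T Γ_t/Γ_T + V_t Γ_T/Γ_t)) ≤ 2 exp(-c)`. -/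
theorem oeuvre_time_uniform_concentration
    {Ω : Type*} {m0 : MeasurableSpace Ω} {μ : Measure Ω} [IsProbabilityMeasure μ]
    (ℱ : Filtration ℕ m0)
    (Δ Δ' : ℕ → Ω → ℝ) (γ σ : ℕ → ℝ) (b : ℝ) (hb : 0 < b)
    (hΔmeas : ∀ t ≥ 1, StronglyMeasurable[ℱ t] (Δ t))
    (hΔ'meas : ∀ t ≥ 1, StronglyMeasurable[ℱ t] (Δ' t))
    (hΔcond : ∀ t ≥ 1, μ[Δ t | ℱ (t - 1)] =ᵐ[μ] 0)
    (hΔ'cond : ∀ t ≥ 1, μ[Δ' t | ℱ (t - 1)] =ᵐ[μ] 0)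
    (hΔbd : ∀ t ≥ 1, ∀ᵐ ω ∂μ, |Δ t ω| ≤ b)
    (hσnn : ∀ t ≥ 2, 0 ≤ σ t)
    (hstab : ∀ t ≥ 2, ∀ᵐ ω ∂μ, |Δ t ω - Δ' t ω| ≤ σ t)
    (hγ : ∀ t ≥ 2, γ t ∈ Set.Ico (0 : ℝ) 1)
    (Γ : ℕ → ℝ) (hΓ : ∀ t ≥ 1, Γ t = ∏ i ∈ Finset.Icc 2 t, (1 - γ i))
    (M : ℕ → Ω → ℝ)
    (hM1 : M 1 = Δ 1)
    (hMrec : ∀ t ≥ 2, ∀ ω,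
      M t ω = Δ t ω - (1 - γ t) * Δ' t ω + (1 - γ t) * M (t - 1) ω)
    (V : ℕ → ℝ) (hV1 : V 1 = b ^ 2)
    (hVrec : ∀ t ≥ 2,
      V t = (γ t * b + (1 - γ t) * σ t) ^ 2 + (1 - γ t) ^ 2 * V (t - 1)) :
    ∀ c > (0 : ℝ), ∀ T ≥ 1,
      μ {ω | ∃ t, 1 ≤ t ∧ t ≤ T ∧
          Real.sqrt (c / (2 * V T)) * (V T * Γ t / Γ T + V t * Γ T / Γ t) ≤ |M t ω|}
        ≤ ENNReal.ofReal (2 * Real.exp (-c)) := by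
  intro c hc T hT
  have hγ1 : ∀ i, 2 ≤ i → 0 < 1 - γ i := fun i hi => by
    have := (hγ i hi).2; linarith
  have hγ0 : ∀ i, 2 ≤ i → 0 ≤ γ i := fun i hi => (hγ i hi).1
  have hΓpos : ∀ t, 1 ≤ t → 0 < Γ t := by
    intro t ht
    rw [hΓ t ht]
    exact Finset.prod_pos fun i hi => hγ1 i (Finset.mem_Icc.mp hi).1
  have hΓ1 : Γ 1 = 1 := by rw [hΓ 1 le_rfl]; simp
  have hΓsucc : ∀ t, 1 ≤ t → Γ (t + 1) = Γ t * (1 - γ (t + 1)) := by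
    intro t ht
    rw [hΓ (t + 1) (by omega), hΓ t ht, Finset.prod_Icc_succ_top (by omega : 2 ≤ t + 1)]
  have hVpos : ∀ t, 1 ≤ t → 0 < V t := by
    intro t ht
    induction t with
    | zero => omega
    | succ n ih =>
      rcases Nat.lt_or_ge n 1 with h1 | h1
      · have hn : n = 0 := by omega
        subst hn
        have : V 1 = b ^ 2 := hV1
        rw [this]
        positivity
      · have hrec := hVrec (n + 1) (by omega)
        simp only [Nat.add_sub_cancel] at hrec
        rw [hrec]
        exact add_pos_of_nonneg_of_pos (sq_nonneg _)
          (mul_pos (pow_pos (hγ1 (n + 1) (by omega)) 2) (ih h1))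
  have hΔint : ∀ t, 1 ≤ t → Integrable (Δ t) μ := fun t ht =>
    integrable_of_abs_le ((hΔmeas t ht).mono (ℱ.le t)).aestronglyMeasurable (hΔbd t ht)
  have hΔ'int : ∀ t, 2 ≤ t → Integrable (Δ' t) μ := by
    intro t ht
    refine integrable_of_abs_le (C := b + σ t)
      ((hΔ'meas t (by omega)).mono (ℱ.le t)).aestronglyMeasurable ?_
    filter_upwards [hΔbd t (by omega), hstab t ht] with ω h1 h2
    have heq : Δ' t ω = Δ t ω - (Δ t ω - Δ' t ω) := by ring
    rw [heq, sub_eq_add_neg]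
    refine (abs_add_le _ _).trans ?_
    rw [abs_neg]
    exact add_le_add h1 h2
  -- the normalized increments and their bounds
  set d : ℕ → Ω → ℝ := fun t ω => if t = 0 then 0 else if t = 1 then Δ 1 ω
      else (Δ t ω - (1 - γ t) * Δ' t ω) / Γ t with hd
  set κ : ℕ → ℝ := fun t => if t = 0 then 0 else if t = 1 then b
      else (γ t * b + (1 - γ t) * σ t) / Γ t with hκ
  have hd0 : d 0 = 0 := by funext ω; simp [hd]
  have hd1 : d 1 = Δ 1 := by funext ω; simp [hd]
  have hdt : ∀ t, 2 ≤ t → ∀ ω, d t ω = (Δ t ω - (1 - γ t) * Δ' t ω) / Γ t := by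
    intro t ht ω
    have h0 : t ≠ 0 := by omega
    have h1 : t ≠ 1 := by omega
    simp [hd, h0, h1]
  have hκ0 : κ 0 = 0 := by simp [hκ]
  have hκ1 : κ 1 = b := by simp [hκ]
  have hκt : ∀ t, 2 ≤ t → κ t = (γ t * b + (1 - γ t) * σ t) / Γ t := by
    intro t ht
    have h0 : t ≠ 0 := by omega
    have h1 : t ≠ 1 := by omega
    simp [hκ, h0, h1]
  have hκnn : ∀ t, 0 ≤ κ t := by
    intro t
    match t with
    | 0 => rw [hκ0]
    | 1 => rw [hκ1]; exact hb.le
    | (n + 2) =>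
      rw [hκt (n + 2) (by omega)]
      have h2 : (2 : ℕ) ≤ n + 2 := by omega
      exact div_nonneg
        (add_nonneg (mul_nonneg (hγ0 _ h2) hb.le)
          (mul_nonneg (hγ1 _ h2).le (hσnn _ h2)))
        (hΓpos _ (by omega)).le
  have hmeas2 : ∀ t, StronglyMeasurable[ℱ t] (d t) := by
    intro t
    match t with
    | 0 => rw [hd0]; exact stronglyMeasurable_const
    | 1 => rw [hd1]; exact hΔmeas 1 le_rfl
    | (n + 2) =>
      have heq : d (n + 2)
          = fun ω => (Δ (n + 2) ω - (1 - γ (n + 2)) * Δ' (n + 2) ω) * (Γ (n + 2))⁻¹ := by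
        funext ω; rw [hdt (n + 2) (by omega) ω, div_eq_mul_inv]
      rw [heq]
      exact ((hΔmeas _ (by omega)).sub
        (stronglyMeasurable_const.mul (hΔ'meas _ (by omega)))).mul stronglyMeasurable_const
  have hbd2 : ∀ t, ∀ᵐ ω ∂μ, |d t ω| ≤ κ t := by
    intro t
    match t with
    | 0 => rw [hκ0]; filter_upwards with ω; rw [hd0]; simp
    | 1 =>
      rw [hκ1]
      filter_upwards [hΔbd 1 le_rfl] with ω h
      rw [hd1]; exact h
    | (n + 2) =>
      have h2 : (2 : ℕ) ≤ n + 2 := by omega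
      filter_upwards [hΔbd (n + 2) (by omega), hstab (n + 2) h2] with ω h1 h2'
      rw [hdt (n + 2) h2 ω, hκt (n + 2) h2, abs_div, abs_of_pos (hΓpos _ (by omega))]
      gcongr
      · exact (hΓpos _ (by omega)).le
      have key : Δ (n + 2) ω - (1 - γ (n + 2)) * Δ' (n + 2) ω
          = γ (n + 2) * Δ (n + 2) ω + (1 - γ (n + 2)) * (Δ (n + 2) ω - Δ' (n + 2) ω) := by ring
      rw [key]
      refine (abs_add_le _ _).trans ?_
      rw [abs_mul, abs_mul, abs_of_nonneg (hγ0 _ h2), abs_of_nonneg (hγ1 _ h2).le]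
      exact add_le_add (mul_le_mul_of_nonneg_left h1 (hγ0 _ h2))
        (mul_le_mul_of_nonneg_left h2' (hγ1 _ h2).le)
  have hcond2 : ∀ t, μ[d (t + 1)|ℱ t] =ᵐ[μ] 0 := by
    intro t
    rcases Nat.eq_zero_or_pos t with rfl | htpos
    · rw [hd1]
      simpa using hΔcond 1 le_rfl
    · have hge : (2 : ℕ) ≤ t + 1 := by omega
      have heq : d (t + 1)
          = (Γ (t + 1))⁻¹ • (Δ (t + 1) - (1 - γ (t + 1)) • Δ' (t + 1)) := by
        funext ω
        rw [hdt (t + 1) hge ω]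
        simp only [Pi.smul_apply, Pi.sub_apply, smul_eq_mul]
        rw [div_eq_inv_mul]
      rw [heq]
      have hint1 : Integrable (Δ (t + 1)) μ := hΔint _ (by omega)
      have hint2 : Integrable ((1 - γ (t + 1)) • Δ' (t + 1)) μ := (hΔ'int _ hge).smul _
      have hc1 := hΔcond (t + 1) (by omega)
      have hc2 := hΔ'cond (t + 1) (by omega)
      simp only [Nat.add_sub_cancel] at hc1 hc2
      have e1 := condExp_smul (μ := μ) (m := ℱ t) ((Γ (t + 1))⁻¹)
        (Δ (t + 1) - (1 - γ (t + 1)) • Δ' (t + 1))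
      have e2 := condExp_sub (μ := μ) (m := ℱ t) hint1 hint2
      have e3 := condExp_smul (μ := μ) (m := ℱ t) (1 - γ (t + 1)) (Δ' (t + 1))
      filter_upwards [e1, e2, e3, hc1, hc2] with ω h1 h2 h3 h4 h5
      simp only [Pi.smul_apply, Pi.sub_apply, Pi.zero_apply, smul_eq_mul] at h1 h2 h3 h4 h5 ⊢
      rw [h1, h2, h3, h4, h5]
      ring
  -- identities relating M, V to the normalized sums
  have hMN : ∀ t, 1 ≤ t → ∀ ω, M t ω = Γ t * ∑ i ∈ Finset.range (t + 1), d i ω := by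
    intro t ht
    induction t, ht using Nat.le_induction with
    | base =>
      intro ω
      rw [Finset.sum_range_succ, Finset.sum_range_succ, Finset.sum_range_zero, hΓ1]
      simp [hM1, hd0, hd1]
    | succ t ht ih =>
      intro ω
      have hrec := hMrec (t + 1) (by omega) ω
      simp only [Nat.add_sub_cancel] at hrec
      have hΓt : Γ t ≠ 0 := ne_of_gt (hΓpos t ht)
      have hγt : (1 : ℝ) - γ (t + 1) ≠ 0 := ne_of_gt (hγ1 (t + 1) (by omega))
      rw [hrec, Finset.sum_range_succ, ih ω, hdt (t + 1) (by omega) ω, hΓsucc t ht]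
      field_simp
      ring
  have hVW : ∀ t, 1 ≤ t → V t = Γ t ^ 2 * ∑ i ∈ Finset.range (t + 1), κ i ^ 2 := by
    intro t ht
    induction t, ht using Nat.le_induction with
    | base =>
      rw [Finset.sum_range_succ, Finset.sum_range_succ, Finset.sum_range_zero, hΓ1, hV1,
        hκ0, hκ1]
      ring
    | succ t ht ih =>
      have hrec := hVrec (t + 1) (by omega)
      simp only [Nat.add_sub_cancel] at hrec
      have hΓt : Γ t ≠ 0 := ne_of_gt (hΓpos t ht)
      have hγt : (1 : ℝ) - γ (t + 1) ≠ 0 := ne_of_gt (hγ1 (t + 1) (by omega))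
      rw [hrec, Finset.sum_range_succ, ih, hκt (t + 1) (by omega), hΓsucc t ht]
      field_simp
      ring
  -- the scale parameters
  set WT : ℝ := ∑ i ∈ Finset.range (T + 1), κ i ^ 2 with hWTdef
  have hWTpos : 0 < WT := by
    have h := hVW T hT
    have h2 : 0 < Γ T ^ 2 := pow_pos (hΓpos T hT) 2
    have h3 := hVpos T hT
    rw [h] at h3
    rcases mul_pos_iff.mp h3 with ⟨_, h4⟩ | ⟨h4, _⟩
    · exact h4
    · linarith
  set s : ℝ := Real.sqrt (c / (2 * WT)) with hsdef
  have hspos : 0 < s := Real.sqrt_pos.mpr (by positivity)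
  have hs2 : s ^ 2 = c / (2 * WT) := Real.sq_sqrt (by positivity)
  -- the two one-sided bounds
  have hbound1 := oeuvre_one_sided (μ := μ) (ℱ := ℱ) (d := d) (κ := κ)
    hd0 hκ0 hκnn hmeas2 hbd2 hcond2 (2 * s) hc T
  have hbound2 := oeuvre_one_sided (μ := μ) (ℱ := ℱ) (d := fun t ω => -(d t ω)) (κ := κ)
    (by funext ω; simp [hd0]) hκ0 hκnn (fun t => (hmeas2 t).neg)
    (fun t => by filter_upwards [hbd2 t] with ω h; simpa using h)
    (fun t => by
      have e := condExp_neg (μ := μ) (d (t + 1)) (ℱ t)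
      filter_upwards [e, hcond2 t] with ω h1 h2
      simp only [Pi.neg_apply, Pi.zero_apply] at h1 h2 ⊢
      rw [show (fun ω => -(d (t + 1) ω)) = -(d (t + 1)) from rfl, h1, h2, neg_zero])
    (2 * s) hc T
  -- event inclusion
  have hsub : {ω | ∃ t, 1 ≤ t ∧ t ≤ T ∧
        Real.sqrt (c / (2 * V T)) * (V T * Γ t / Γ T + V t * Γ T / Γ t) ≤ |M t ω|}
      ⊆ {ω | ∃ t, t ≤ T ∧ c + (2 * s) ^ 2 * (∑ i ∈ Finset.range (t + 1), κ i ^ 2) / 2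
            ≤ (2 * s) * ∑ i ∈ Finset.range (t + 1), d i ω}
        ∪ {ω | ∃ t, t ≤ T ∧ c + (2 * s) ^ 2 * (∑ i ∈ Finset.range (t + 1), κ i ^ 2) / 2
            ≤ (2 * s) * ∑ i ∈ Finset.range (t + 1), -(d i ω)} := by
    rintro ω ⟨t, ht1, ht2, hM⟩
    have hΓtpos := hΓpos t ht1
    have hΓTpos := hΓpos T hT
    have hVT := hVW T hT
    rw [← hWTdef] at hVT
    have hVt := hVW t ht1
    have hΓtne : Γ t ≠ 0 := ne_of_gt hΓtpos
    have hΓTne : Γ T ≠ 0 := ne_of_gt hΓTpos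
    have hMt := hMN t ht1 ω
    set Wt : ℝ := ∑ i ∈ Finset.range (t + 1), κ i ^ 2 with hWtdef
    set Nt : ℝ := ∑ i ∈ Finset.range (t + 1), d i ω with hNtdef
    have hsqrt_eq : Real.sqrt (c / (2 * V T)) = s / Γ T := by
      have h1 : c / (2 * V T) = (s / Γ T) ^ 2 := by
        rw [div_pow, hs2, hVT, div_div]
        congr 1
        ring
      rw [h1, Real.sqrt_sq (by positivity)]
    have hthr : Real.sqrt (c / (2 * V T)) * (V T * Γ t / Γ T + V t * Γ T / Γ t)
        = s * Γ t * (WT + Wt) := by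
      rw [hsqrt_eq, hVT, hVt]
      field_simp
    rw [hthr] at hM
    have habs : |M t ω| = Γ t * |Nt| := by
      rw [hMt, abs_mul, abs_of_pos hΓtpos]
    rw [habs] at hM
    have h1 : s * (WT + Wt) ≤ |Nt| := by
      have h := (mul_le_mul_iff_right₀ hΓtpos).mp (by linarith : Γ t * (s * (WT + Wt)) ≤ Γ t * |Nt|)
      exact h
    have h2s : 2 * s ^ 2 * WT = c := by
      rw [hs2]
      field_simp
    have h2 : c + (2 * s) ^ 2 * Wt / 2 ≤ (2 * s) * |Nt| := by
      have key : c + (2 * s) ^ 2 * Wt / 2 = (2 * s) * (s * (WT + Wt)) := by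
        linear_combination -h2s
      rw [key]
      exact mul_le_mul_of_nonneg_left h1 (by positivity)
    rcases le_or_gt 0 Nt with hsign | hsign
    · left
      exact ⟨t, ht2, by rwa [abs_of_nonneg hsign] at h2⟩
    · right
      refine ⟨t, ht2, ?_⟩
      rw [abs_of_neg hsign] at h2
      have hneg : ∑ i ∈ Finset.range (t + 1), -(d i ω) = -Nt := by
        rw [hNtdef, ← Finset.sum_neg_distrib]
      rw [hneg]
      exact h2
  refine (measure_mono hsub).trans ((measure_union_le _ _).trans ?_)
  refine (add_le_add hbound1 hbound2).trans ?_
  rw [two_mul, ENNReal.ofReal_add (Real.exp_pos _).le (Real.exp_pos _).le]
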